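/- For 1 < p < ∞ define 𝔤₊(l,k) = (p−1)·∫_k^l |s|^{p−2}(s−k)₊ ds and 𝔤₋(l,k) = −(p−1)·∫_k^l |s|^{p−2}(s−k)₋ ds. Then there exists a constant C = C(p) ≥ 1 such that for all l, k ∈ ℝ: (1/C)·(|l|+|k|)^{p−2}·(l−k)₊² ≤ 𝔤₊(l,k) ≤ C·(|l|+|k|)^{p−2}·(l−k)₊², and similarly (1/C)·(|l|+|k|)^{p−2}·(l−k)₋² ≤ 𝔤₋(l,k) ≤ C·(|l|+|k|)^{p−2}·(l−k)₋². -/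

import Mathlib

open MeasureTheory Set intervalIntegral

lemma II_abs_rpow {r : ℝ} (hr : -1 < r) (a b : ℝ) :
    IntervalIntegrable (fun x => |x| ^ r) volume a b := by
  suffices h : ∀ c : ℝ, IntervalIntegrable (fun x => |x| ^ r) volume 0 c from
    (h a).symm.trans (h b)
  have hpos : ∀ c : ℝ, 0 ≤ c → IntervalIntegrable (fun x => |x| ^ r) volume 0 c := by
    intro c hc
    rw [intervalIntegrable_iff_integrableOn_Ioc_of_le hc]
    refine ((intervalIntegrable_rpow' hr (a := 0) (b := c)).1).congr_fun
      (fun x hx => ?_) measurableSet_Ioc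
    rw [abs_of_pos hx.1]
  intro c
  rcases le_or_gt 0 c with hc | hc
  · exact hpos c hc
  · have h2 := (IntervalIntegrable.iff_comp_neg (f := fun x => |x| ^ r) (a := 0) (b := -c)).mp (hpos (-c) (by linarith))
    simpa [abs_neg] using h2

lemma II_main {r : ℝ} (hr : -1 < r) (a b c : ℝ) :
    IntervalIntegrable (fun s => |s| ^ r * (s - c)) volume a b :=
  (II_abs_rpow hr a b).mul_continuousOn (by fun_prop)

lemma integral_id_sub (a b : ℝ) : (∫ s in a..b, (s - a)) = (b - a) ^ 2 / 2 := by
  have h := intervalIntegral.integral_comp_sub_right (a := a) (b := b) (fun s => s) a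
  rw [h, integral_id]
  ring

lemma integral_abs_rpow_right {r : ℝ} (hr : -1 < r) {c : ℝ} (hc : 0 ≤ c) :
    (∫ s in (0:ℝ)..c, |s| ^ r) = c ^ (r + 1) / (r + 1) := by
  have h1 : (∫ s in (0:ℝ)..c, |s| ^ r) = ∫ s in (0:ℝ)..c, s ^ r := by
    refine intervalIntegral.integral_congr (fun x hx => ?_)
    rw [uIcc_of_le hc] at hx
    rw [abs_of_nonneg hx.1]
  rw [h1, integral_rpow (Or.inl hr), Real.zero_rpow (by linarith), sub_zero]

lemma integral_abs_rpow_sym {r : ℝ} (hr : -1 < r) {c : ℝ} (hc : 0 ≤ c) :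
    (∫ s in (-c)..c, |s| ^ r) = 2 * c ^ (r + 1) / (r + 1) := by
  have h2 : (∫ s in (-c)..(0:ℝ), |s| ^ r) = ∫ s in (0:ℝ)..c, |s| ^ r := by
    have := intervalIntegral.integral_comp_neg (a := 0) (b := c) (fun x => |x| ^ r)
    simp only [abs_neg, neg_zero] at this
    rw [← this]
  have hadd := intervalIntegral.integral_add_adjacent_intervals
    (a := -c) (b := 0) (c := c) (f := fun x => |x| ^ r)
    (II_abs_rpow hr _ _) (II_abs_rpow hr _ _)
  rw [← hadd, h2, integral_abs_rpow_right hr hc]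
  ring

lemma J_le {r : ℝ} (hr : -1 < r) {a b K : ℝ} (hab : a ≤ b)
    (hK : ∀ x ∈ Icc a b, |x| ^ r ≤ K) :
    (∫ s in a..b, |s| ^ r * (s - a)) ≤ K * ((b - a) ^ 2 / 2) := by
  have h1 : (∫ s in a..b, |s| ^ r * (s - a)) ≤ ∫ s in a..b, K * (s - a) := by
    refine intervalIntegral.integral_mono_on hab (II_main hr a b a)
      ((continuous_const.mul (continuous_id.sub continuous_const)).intervalIntegrable a b)
      (fun x hx => ?_)
    exact mul_le_mul_of_nonneg_right (hK x hx) (by linarith [hx.1])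
  rw [intervalIntegral.integral_const_mul, integral_id_sub] at h1
  exact h1

lemma J_ge {r : ℝ} (hr : -1 < r) {a b K : ℝ} (hab : a ≤ b) (_hK0 : 0 ≤ K)
    (hK : ∀ x ∈ Icc a b, x ≠ 0 → K ≤ |x| ^ r) :
    K * ((b - a) ^ 2 / 2) ≤ ∫ s in a..b, |s| ^ r * (s - a) := by
  have hae : ∀ᵐ x ∂(volume.restrict (Icc a b)), x ≠ 0 := by
    refine (ae_restrict_of_ae ?_)
    have h0 : volume ({(0:ℝ)} : Set ℝ) = 0 := Real.volume_singleton
    have := measure_mono_null (fun x (hx : x ∈ {y : ℝ | ¬ y ≠ 0}) => by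
      simpa using hx) h0
    exact (ae_iff).mpr this
  have h1 : (∫ s in a..b, K * (s - a)) ≤ ∫ s in a..b, |s| ^ r * (s - a) := by
    refine intervalIntegral.integral_mono_ae_restrict hab
      ((continuous_const.mul (continuous_id.sub continuous_const)).intervalIntegrable a b)
      (II_main hr a b a) ?_
    filter_upwards [hae, ae_restrict_mem measurableSet_Icc] with x hx0 hxm
    exact mul_le_mul_of_nonneg_right (hK x hxm hx0) (by linarith [hxm.1])
  rw [intervalIntegral.integral_const_mul, integral_id_sub] at h1
  exact h1

lemma J_ge_sub {r : ℝ} (hr : -1 < r) {a b u v K : ℝ} (hau : a ≤ u) (huv : u ≤ v)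
    (hvb : v ≤ b) (hK : ∀ x ∈ Icc u v, K ≤ |x| ^ r * (x - a)) :
    K * (v - u) ≤ ∫ s in a..b, |s| ^ r * (s - a) := by
  have h1 : (∫ s in u..v, (K : ℝ)) ≤ ∫ s in u..v, |s| ^ r * (s - a) := by
    refine intervalIntegral.integral_mono_on huv (intervalIntegrable_const)
      (II_main hr u v a) hK
  rw [intervalIntegral.integral_const, smul_eq_mul] at h1
  have h2 : (∫ s in u..v, |s| ^ r * (s - a)) ≤ ∫ s in a..b, |s| ^ r * (s - a) := by
    refine intervalIntegral.integral_mono_interval hau huv hvb ?_ (II_main hr a b a)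
    filter_upwards [ae_restrict_mem measurableSet_Ioc] with x hx
    exact mul_nonneg (Real.rpow_nonneg (abs_nonneg _) _) (by linarith [hx.1])
  calc K * (v - u) = (v - u) * K := by ring
    _ ≤ ∫ s in u..v, |s| ^ r * (s - a) := h1
    _ ≤ _ := h2

lemma J_le_tail {r : ℝ} (hr : -1 < r) {a b d : ℝ} (hab : a ≤ b) (hda : -d ≤ a)
    (hbd : b ≤ d) (hd : 0 ≤ d) :
    (∫ s in a..b, |s| ^ r * (s - a)) ≤ (b - a) * (2 * d ^ (r + 1) / (r + 1)) := by
  have h1 : (∫ s in a..b, |s| ^ r * (s - a)) ≤ ∫ s in a..b, |s| ^ r * (b - a) := by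
    refine intervalIntegral.integral_mono_on hab (II_main hr a b a)
      ((II_abs_rpow hr a b).mul_continuousOn continuousOn_const) (fun x hx => ?_)
    exact mul_le_mul_of_nonneg_left (by linarith [hx.2]) (Real.rpow_nonneg (abs_nonneg _) _)
  rw [intervalIntegral.integral_mul_const] at h1
  have h2 : (∫ s in a..b, |s| ^ r) ≤ ∫ s in (-d)..d, |s| ^ r := by
    refine intervalIntegral.integral_mono_interval hda hab hbd ?_ (II_abs_rpow hr _ _)
    filter_upwards with x
    exact Real.rpow_nonneg (abs_nonneg _) _
  rw [integral_abs_rpow_sym hr hd] at h2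
  have hnn : 0 ≤ b - a := by linarith
  calc (∫ s in a..b, |s| ^ r * (s - a)) ≤ (∫ s in a..b, |s| ^ r) * (b - a) := h1
    _ ≤ (2 * d ^ (r + 1) / (r + 1)) * (b - a) := mul_le_mul_of_nonneg_right h2 hnn
    _ = (b - a) * (2 * d ^ (r + 1) / (r + 1)) := by ring

set_option maxHeartbeats 2000000 in
lemma core (p : ℝ) (hp : 1 < p) : ∃ C ≥ (1:ℝ), ∀ a b : ℝ, a ≤ b →
    1 / C * (|a| + |b|) ^ (p - 2) * (b - a) ^ 2 ≤
      (p - 1) * ∫ s in a..b, |s| ^ (p - 2) * (s - a) ∧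
    (p - 1) * (∫ s in a..b, |s| ^ (p - 2) * (s - a)) ≤
      C * (|a| + |b|) ^ (p - 2) * (b - a) ^ 2 := by
  have hr : -1 < p - 2 := by linarith
  have hp1 : (0:ℝ) < p - 1 := by linarith
  rcases le_or_gt 2 p with hp2 | hp2
  · -- regime 1 : p ≥ 2
    have hq0 : (0:ℝ) ≤ p - 2 := by linarith
    have h32 : (1:ℝ) ≤ 32 ^ (p-2) := by
      have := Real.rpow_le_rpow_of_exponent_le (x := 32) (by norm_num) hq0
      simpa [Real.rpow_zero] using this
    set C : ℝ := 16 * 32 ^ (p-2) / (p - 1) + (p - 1) / 2 + 1 with hCdef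
    have hC1 : (1:ℝ) ≤ C := by
      have h1 : (0:ℝ) ≤ 16 * 32 ^ (p-2) / (p - 1) := by positivity
      have h2 : (0:ℝ) ≤ (p-1)/2 := by positivity
      simp only [hCdef]; linarith
    have hC0 : (0:ℝ) < C := by linarith
    refine ⟨C, hC1, fun a b hab => ?_⟩
    rcases hab.eq_or_lt with rfl | hlt
    · simp [intervalIntegral.integral_same]
    -- a < b
    have hh : (0:ℝ) < b - a := by linarith
    have hA : 0 < |a| + |b| := by
      rcases lt_or_ge 0 b with hb | hb
      · have := abs_pos.mpr hb.ne'
        linarith [abs_nonneg a]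
      · have ha : a < 0 := by linarith
        have := abs_pos.mpr ha.ne
        linarith [abs_nonneg b]
    have habs : ∀ x ∈ Icc a b, |x| ≤ |a| + |b| := by
      intro x hx
      rw [abs_le]
      constructor
      · linarith [neg_abs_le a, hx.1, abs_nonneg b]
      · linarith [le_abs_self b, hx.2, abs_nonneg a]
    set A := |a| + |b| with hAdef
    -- lower bound claim
    have hJ2 : A ^ (p-2) / 32 ^ (p-2) * ((b - a) ^ 2 / 16) ≤
        ∫ s in a..b, |s| ^ (p-2) * (s - a) := by
      rcases le_or_gt (max |a| |b|) (2*(b-a)) with hcase | hcase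
      · -- case (i) : subinterval trick
        have hA4 : A ≤ 4*(b-a) := by
          have h1 := le_max_left |a| |b|
          have h2 := le_max_right |a| |b|
          simp only [hAdef]; linarith
        have hsub : (∀ x ∈ Icc (a + (b-a)/2) (a + (b-a)/2 + (b-a)/8), (b-a)/8 ≤ |x|) ∨
            (∀ x ∈ Icc (b - (b-a)/8) b, (b-a)/8 ≤ |x|) := by
          by_contra hcon
          push_neg at hcon
          obtain ⟨⟨x, hx, hx8⟩, ⟨y, hy, hy8⟩⟩ := hcon
          have hx' := abs_lt.mp hx8
          have hy' := abs_lt.mp hy8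
          have h1 := hx.2
          have h2 := hy.1
          linarith
        obtain ⟨u, hau, hub, hxlb, hxa⟩ : ∃ u, a ≤ u ∧ u + (b-a)/8 ≤ b ∧
            (∀ x ∈ Icc u (u + (b-a)/8), (b-a)/8 ≤ |x|) ∧ a + (b-a)/2 ≤ u := by
          rcases hsub with h | h
          · exact ⟨a + (b-a)/2, by linarith, by linarith, fun x hx => h x hx, le_refl _⟩
          · exact ⟨b - (b-a)/8, by linarith, by linarith,
              fun x hx => h x ⟨hx.1, by linarith [hx.2]⟩, by linarith⟩
        have hKpt : ∀ x ∈ Icc u (u + (b-a)/8),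
            ((b-a)/8) ^ (p-2) * ((b-a)/2) ≤ |x| ^ (p-2) * (x - a) := by
          intro x hx
          have h1 : ((b-a)/8) ^ (p-2) ≤ |x| ^ (p-2) :=
            Real.rpow_le_rpow (by linarith) (hxlb x hx) hq0
          have h2 : (b-a)/2 ≤ x - a := by linarith [hx.1]
          exact mul_le_mul h1 h2 (by linarith) (Real.rpow_nonneg (abs_nonneg _) _)
        have hJ := J_ge_sub hr hau (by linarith) hub hKpt
        have hbase : A/32 ≤ (b-a)/8 := by linarith
        have h3 : (A/32) ^ (p-2) ≤ ((b-a)/8) ^ (p-2) :=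
          Real.rpow_le_rpow (by positivity) hbase hq0
        have h4 : (A/32) ^ (p-2) = A ^ (p-2) / 32 ^ (p-2) :=
          Real.div_rpow (by positivity) (by norm_num) _
        calc A ^ (p-2) / 32 ^ (p-2) * ((b - a) ^ 2 / 16)
            = (A/32) ^ (p-2) * ((b-a)/2) * ((b-a)/8) := by rw [h4]; ring
          _ ≤ ((b-a)/8) ^ (p-2) * ((b-a)/2) * ((b-a)/8) := by
              have hnn : (0:ℝ) ≤ (b-a)/8 := by linarith
              have hnn2 : (0:ℝ) ≤ (b-a)/2 := by linarith
              exact mul_le_mul_of_nonneg_right (mul_le_mul_of_nonneg_right h3 hnn2) hnn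
          _ = ((b-a)/8) ^ (p-2) * ((b-a)/2) * (u + (b-a)/8 - u) := by ring
          _ ≤ _ := hJ
      · -- case (ii) : interval far from 0
        have hlow : ∀ x ∈ Icc a b, A/4 ≤ |x| := by
          intro x hx
          have h1 : |a| - |x| ≤ |a - x| := abs_sub_abs_le_abs_sub a x
          have h2 : |b| - |x| ≤ |b - x| := abs_sub_abs_le_abs_sub b x
          have h3 : |a - x| = x - a := by rw [abs_sub_comm, abs_of_nonneg (by linarith [hx.1])]
          have h4 : |b - x| = b - x := abs_of_nonneg (by linarith [hx.2])
          have h5 := le_max_left |a| |b|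
          have h6 := le_max_right |a| |b|
          have h7 : max |a| |b| ≤ |x| + (b - a) := by
            rcases max_cases |a| |b| with ⟨hm, _⟩ | ⟨hm, _⟩ <;> rw [hm] <;>
              [linarith [hx.1, hx.2]; linarith [hx.1, hx.2]]
          simp only [hAdef]
          linarith
        have hK : ∀ x ∈ Icc a b, x ≠ 0 → (A/4) ^ (p-2) ≤ |x| ^ (p-2) := fun x hx _ =>
          Real.rpow_le_rpow (by positivity) (hlow x hx) hq0
        have hJ := J_ge hr hab (Real.rpow_nonneg (by positivity) _) hK
        have h4 : (A/4) ^ (p-2) = A ^ (p-2) / 4 ^ (p-2) :=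
          Real.div_rpow (by positivity) (by norm_num) _
        have h5 : (4:ℝ) ^ (p-2) ≤ 32 ^ (p-2) :=
          Real.rpow_le_rpow (by norm_num) (by norm_num) hq0
        have h6 : A ^ (p-2) / 32 ^ (p-2) ≤ A ^ (p-2) / 4 ^ (p-2) := by
          have h4p : (0:ℝ) < 4 ^ (p-2) := Real.rpow_pos_of_pos (by norm_num) _
          exact div_le_div_of_nonneg_left (Real.rpow_nonneg hA.le _) h4p h5
        calc A ^ (p-2) / 32 ^ (p-2) * ((b - a) ^ 2 / 16)
            ≤ A ^ (p-2) / 4 ^ (p-2) * ((b - a) ^ 2 / 2) := by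
              have : (b-a)^2/16 ≤ (b-a)^2/2 := by nlinarith [sq_nonneg (b-a)]
              exact mul_le_mul h6 this (by positivity) (by positivity)
          _ = (A/4) ^ (p-2) * ((b - a) ^ 2 / 2) := by rw [h4]
          _ ≤ _ := hJ
    -- upper bound
    have hup : (∫ s in a..b, |s| ^ (p-2) * (s - a)) ≤ A ^ (p-2) * ((b - a) ^ 2 / 2) :=
      J_le hr hab (fun x hx => Real.rpow_le_rpow (abs_nonneg _) (habs x hx) hq0)
    have hApos : (0:ℝ) < A ^ (p-2) := Real.rpow_pos_of_pos hA _
    have h32p : (0:ℝ) < 32 ^ (p-2) := Real.rpow_pos_of_pos (by norm_num) _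
    have hCp : 16 * 32 ^ (p-2) ≤ C * (p-1) := by
      have h1 : 16 * 32 ^ (p-2) / (p-1) * (p-1) = 16 * 32 ^ (p-2) := by
        field_simp
      have h2 : C * (p-1) = 16 * 32 ^ (p-2) / (p-1) * (p-1) + ((p-1)/2 + 1) * (p-1) := by
        simp only [hCdef]; ring
      rw [h2, h1]
      nlinarith
    constructor
    · have key : 1/C ≤ (p-1)/(32 ^ (p-2) * 16) := by
        rw [div_le_div_iff₀ hC0 (by positivity)]
        nlinarith
      calc 1/C * A ^ (p-2) * (b-a)^2
          ≤ (p-1)/(32 ^ (p-2) * 16) * A ^ (p-2) * (b-a)^2 := by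
            exact mul_le_mul_of_nonneg_right (mul_le_mul_of_nonneg_right key hApos.le)
              (sq_nonneg _)
        _ = (p-1) * (A ^ (p-2) / 32 ^ (p-2) * ((b-a)^2/16)) := by
            field_simp
        _ ≤ (p-1) * ∫ s in a..b, |s| ^ (p-2) * (s - a) :=
            mul_le_mul_of_nonneg_left hJ2 hp1.le
    · calc (p-1) * ∫ s in a..b, |s| ^ (p-2) * (s - a)
          ≤ (p-1) * (A ^ (p-2) * ((b-a)^2/2)) := mul_le_mul_of_nonneg_left hup hp1.le
        _ ≤ C * A ^ (p-2) * (b-a)^2 := by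
            have h1 : (p-1)/2 ≤ C := by
              have : (0:ℝ) ≤ 16 * 32 ^ (p-2) / (p - 1) := by positivity
              simp only [hCdef]; linarith
            nlinarith [mul_nonneg hApos.le (sq_nonneg (b-a))]
  · -- regime 2 : 1 < p < 2
    have hq' : p - 2 ≤ 0 := by linarith
    set c2 : ℝ := (4:ℝ) ^ (2-p) / 2 + 2 ^ (4-p) / (p-1) with hc2def
    have hc2pos : 0 < c2 := by positivity
    set C : ℝ := 2/(p-1) + (p-1) * c2 + 1 with hCdef
    have hC1 : (1:ℝ) ≤ C := by
      have h1 : (0:ℝ) ≤ 2/(p-1) := by positivity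
      have h2 : (0:ℝ) ≤ (p-1)*c2 := by positivity
      simp only [hCdef]; linarith
    have hC0 : (0:ℝ) < C := by linarith
    refine ⟨C, hC1, fun a b hab => ?_⟩
    rcases hab.eq_or_lt with rfl | hlt
    · simp [intervalIntegral.integral_same]
    have hh : (0:ℝ) < b - a := by linarith
    have hA : 0 < |a| + |b| := by
      rcases lt_or_ge 0 b with hb | hb
      · have := abs_pos.mpr hb.ne'
        linarith [abs_nonneg a]
      · have ha : a < 0 := by linarith
        have := abs_pos.mpr ha.ne
        linarith [abs_nonneg b]
    set A := |a| + |b| with hAdef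
    have habs : ∀ x ∈ Icc a b, |x| ≤ A := by
      intro x hx
      rw [abs_le]
      constructor
      · have := neg_abs_le a
        have := abs_nonneg b
        simp only [hAdef]; linarith [hx.1]
      · have := le_abs_self b
        have := abs_nonneg a
        simp only [hAdef]; linarith [hx.2]
    have hApos : (0:ℝ) < A ^ (p-2) := Real.rpow_pos_of_pos hA _
    -- lower bound
    have hK : ∀ x ∈ Icc a b, x ≠ 0 → A ^ (p-2) ≤ |x| ^ (p-2) := fun x hx hx0 =>
      Real.rpow_le_rpow_of_nonpos (abs_pos.mpr hx0) (habs x hx) hq'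
    have hlowJ := J_ge hr hab (Real.rpow_nonneg hA.le _) hK
    -- upper bound
    have hup : (∫ s in a..b, |s| ^ (p-2) * (s - a)) ≤ c2 * (A ^ (p-2) * (b-a)^2) := by
      rcases le_or_gt (max |a| |b|) (2*(b-a)) with hcase | hcase
      · -- tail bound
        have hd1 : -(2*(b-a)) ≤ a := by
          have h1 := le_max_left |a| |b|
          have h2 := neg_abs_le a
          linarith
        have hd2 : b ≤ 2*(b-a) := by
          have h1 := le_max_right |a| |b|
          have h2 := le_abs_self b
          linarith
        have hJ := J_le_tail hr hab hd1 hd2 (by linarith)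
        rw [show p-2+1 = p-1 by ring] at hJ
        have hA4 : A ≤ 4*(b-a) := by
          have h1 := le_max_left |a| |b|
          have h2 := le_max_right |a| |b|
          simp only [hAdef]; linarith
        have e1 : (2*(b-a)) ^ (p-1) = 2 ^ (p-1) * (b-a) ^ (p-1) :=
          Real.mul_rpow (by norm_num) hh.le
        have e2 : (b-a) * (b-a) ^ (p-1) = (b-a) ^ p := by
          have h := Real.rpow_add hh 1 (p-1)
          rw [Real.rpow_one, show (1:ℝ)+(p-1) = p by ring] at h
          exact h.symm
        have e3 : (2:ℝ) * 2 ^ (p-1) = 2 ^ p := by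
          have h := Real.rpow_add (show (0:ℝ) < 2 by norm_num) 1 (p-1)
          rw [Real.rpow_one, show (1:ℝ)+(p-1) = p by ring] at h
          exact h.symm
        have hLHS : (b-a) * (2 * (2*(b-a)) ^ (p-1) / (p-1)) = 2 ^ p * (b-a) ^ p / (p-1) := by
          rw [e1, ← e2, ← e3]; ring
        have e4 : (4*(b-a)) ^ (p-2) ≤ A ^ (p-2) :=
          Real.rpow_le_rpow_of_nonpos hA hA4 hq'
        have e5 : (4*(b-a)) ^ (p-2) = 4 ^ (p-2) * (b-a) ^ (p-2) :=
          Real.mul_rpow (by norm_num) hh.le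
        have e6 : (b-a) ^ (p-2) * (b-a)^2 = (b-a) ^ p := by
          have h2 : ((b-a):ℝ)^(2:ℕ) = (b-a) ^ ((2:ℕ):ℝ) := (Real.rpow_natCast _ 2).symm
          rw [h2, ← Real.rpow_add hh]
          norm_num
        have h42 : (4:ℝ) = 2 ^ (2:ℝ) := by
          rw [show (2:ℝ) = ((2:ℕ):ℝ) by norm_num, Real.rpow_natCast]
          norm_num
        have e7 : (2:ℝ) ^ (4-p) * 4 ^ (p-2) = 2 ^ p := by
          have h4 : (4:ℝ) ^ (p-2) = 2 ^ (2*(p-2)) := by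
            rw [h42, ← Real.rpow_mul (by norm_num : (0:ℝ) ≤ 2)]
          rw [h4, ← Real.rpow_add (show (0:ℝ) < 2 by norm_num)]
          congr 1
          ring
        calc (∫ s in a..b, |s| ^ (p-2) * (s - a))
            ≤ (b-a) * (2 * (2*(b-a)) ^ (p-1) / (p-1)) := hJ
          _ = 2 ^ p * (b-a) ^ p / (p-1) := hLHS
          _ = 2 ^ (4-p)/(p-1) * (4 ^ (p-2) * (b-a) ^ p) := by rw [← e7]; ring
          _ = 2 ^ (4-p)/(p-1) * ((4*(b-a)) ^ (p-2) * (b-a)^2) := by rw [e5, ← e6]; ring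
          _ ≤ 2 ^ (4-p)/(p-1) * (A ^ (p-2) * (b-a)^2) := by
              refine mul_le_mul_of_nonneg_left
                (mul_le_mul_of_nonneg_right e4 (sq_nonneg _)) (by positivity)
          _ ≤ c2 * (A ^ (p-2) * (b-a)^2) := by
              have hle : 2 ^ (4-p)/(p-1) ≤ c2 := by
                have h0 : (0:ℝ) ≤ 4 ^ (2-p)/2 := by positivity
                simp only [hc2def]; linarith
              exact mul_le_mul_of_nonneg_right hle (by positivity)
      · -- far from zero
        have hlow : ∀ x ∈ Icc a b, A/4 ≤ |x| := by
          intro x hx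
          have h1 : |a| - |x| ≤ |a - x| := abs_sub_abs_le_abs_sub a x
          have h2 : |b| - |x| ≤ |b - x| := abs_sub_abs_le_abs_sub b x
          have h3 : |a - x| = x - a := by rw [abs_sub_comm, abs_of_nonneg (by linarith [hx.1])]
          have h4 : |b - x| = b - x := abs_of_nonneg (by linarith [hx.2])
          have h7 : max |a| |b| ≤ |x| + (b - a) := by
            rcases max_cases |a| |b| with ⟨hm, _⟩ | ⟨hm, _⟩ <;> rw [hm] <;>
              [linarith [hx.1, hx.2]; linarith [hx.1, hx.2]]
          have h5 := le_max_left |a| |b|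
          have h6 := le_max_right |a| |b|
          simp only [hAdef]
          linarith
        have hKu : ∀ x ∈ Icc a b, |x| ^ (p-2) ≤ (A/4) ^ (p-2) := fun x hx =>
          Real.rpow_le_rpow_of_nonpos (by positivity) (hlow x hx) hq'
        have hJ := J_le hr hab hKu
        have h4 : (A/4) ^ (p-2) = A ^ (p-2) * 4 ^ (2-p) := by
          rw [Real.div_rpow hA.le (by norm_num),
            show (2:ℝ)-p = -(p-2) by ring, Real.rpow_neg (by norm_num : (0:ℝ) ≤ 4),
            div_eq_mul_inv]
        calc (∫ s in a..b, |s| ^ (p-2) * (s - a))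
            ≤ (A/4) ^ (p-2) * ((b-a)^2/2) := hJ
          _ = 4 ^ (2-p)/2 * (A ^ (p-2) * (b-a)^2) := by rw [h4]; ring
          _ ≤ c2 * (A ^ (p-2) * (b-a)^2) := by
              refine mul_le_mul_of_nonneg_right ?_ (by positivity)
              have h0 : (0:ℝ) ≤ 2 ^ (4-p)/(p-1) := by positivity
              simp only [hc2def]; linarith
    constructor
    · have hC2 : 2 ≤ C * (p-1) := by
        have h1 : 2/(p-1)*(p-1) = 2 := by field_simp
        have h2 : C*(p-1) = 2/(p-1)*(p-1) + ((p-1)*c2 + 1)*(p-1) := by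
          simp only [hCdef]; ring
        rw [h2, h1]
        have h3 : 0 < ((p-1)*c2 + 1)*(p-1) :=
          mul_pos (by nlinarith [mul_pos hp1 hc2pos]) hp1
        linarith
      have key : 1/C ≤ (p-1)/2 := by
        rw [div_le_div_iff₀ hC0 (by norm_num)]
        linarith
      calc 1/C * A ^ (p-2) * (b-a)^2
          ≤ (p-1)/2 * A ^ (p-2) * (b-a)^2 :=
            mul_le_mul_of_nonneg_right (mul_le_mul_of_nonneg_right key hApos.le) (sq_nonneg _)
        _ = (p-1) * (A ^ (p-2) * ((b-a)^2/2)) := by ring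
        _ ≤ (p-1) * ∫ s in a..b, |s| ^ (p-2) * (s - a) :=
            mul_le_mul_of_nonneg_left hlowJ hp1.le
    · have hCc : (p-1)*c2 ≤ C := by
        have h1 : (0:ℝ) ≤ 2/(p-1) := by positivity
        simp only [hCdef]; linarith
      calc (p-1) * ∫ s in a..b, |s| ^ (p-2) * (s - a)
          ≤ (p-1) * (c2 * (A ^ (p-2) * (b-a)^2)) := mul_le_mul_of_nonneg_left hup hp1.le
        _ = ((p-1)*c2) * (A ^ (p-2) * (b-a)^2) := by ring
        _ ≤ C * (A ^ (p-2) * (b-a)^2) := mul_le_mul_of_nonneg_right hCc (by positivity)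
        _ = C * A ^ (p-2) * (b-a)^2 := by ring

set_option maxHeartbeats 1000000 in
theorem g_pm_two_sided_bound (p : ℝ) (hp : 1 < p) :
    ∃ C ≥ (1 : ℝ), ∀ l k : ℝ,
      ((1 / C) * (|l| + |k|) ^ (p - 2) * max (l - k) 0 ^ 2 ≤
          (p - 1) * ∫ s in k..l, |s| ^ (p - 2) * max (s - k) 0 ∧
        (p - 1) * (∫ s in k..l, |s| ^ (p - 2) * max (s - k) 0) ≤
          C * (|l| + |k|) ^ (p - 2) * max (l - k) 0 ^ 2) ∧
      ((1 / C) * (|l| + |k|) ^ (p - 2) * max (k - l) 0 ^ 2 ≤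
          -((p - 1) * ∫ s in k..l, |s| ^ (p - 2) * max (k - s) 0) ∧
        -((p - 1) * ∫ s in k..l, |s| ^ (p - 2) * max (k - s) 0) ≤
          C * (|l| + |k|) ^ (p - 2) * max (k - l) 0 ^ 2) := by
  obtain ⟨C, hC1, hcore⟩ := core p hp
  refine ⟨C, hC1, fun l k => ?_⟩
  constructor
  · rcases le_or_gt k l with hkl | hkl
    · have hint : (∫ s in k..l, |s| ^ (p - 2) * max (s - k) 0)
          = ∫ s in k..l, |s| ^ (p - 2) * (s - k) := by
        refine intervalIntegral.integral_congr (fun x hx => ?_)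
        rw [Set.uIcc_of_le hkl] at hx
        rw [max_eq_left (by linarith [hx.1] : (0:ℝ) ≤ x - k)]
      rw [hint, max_eq_left (by linarith : (0:ℝ) ≤ l - k),
        show (|l| + |k| : ℝ) = |k| + |l| from add_comm _ _]
      exact hcore k l hkl
    · have hint : (∫ s in k..l, |s| ^ (p - 2) * max (s - k) 0) = 0 := by
        have heq : Set.EqOn (fun s => |s| ^ (p - 2) * max (s - k) 0) (fun _ => (0:ℝ))
            (Set.uIcc k l) := by
          intro x hx
          rw [Set.uIcc_of_ge hkl.le] at hx
          simp only
          rw [max_eq_right (by linarith [hx.2] : x - k ≤ 0), mul_zero]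
        rw [intervalIntegral.integral_congr heq, intervalIntegral.integral_zero]
      rw [hint, max_eq_right (by linarith : l - k ≤ 0)]
      norm_num
  · rcases le_or_gt l k with hlk | hlk
    · have h1 : (∫ s in k..l, |s| ^ (p - 2) * max (k - s) 0)
          = -∫ s in l..k, |s| ^ (p - 2) * max (k - s) 0 :=
        intervalIntegral.integral_symm l k
      have h2 : (∫ s in l..k, |s| ^ (p - 2) * max (k - s) 0)
          = ∫ s in l..k, |s| ^ (p - 2) * (k - s) := by
        refine intervalIntegral.integral_congr (fun x hx => ?_)
        rw [Set.uIcc_of_le hlk] at hx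
        rw [max_eq_left (by linarith [hx.2] : (0:ℝ) ≤ k - x)]
      have h3 : (∫ s in l..k, |s| ^ (p - 2) * (k - s))
          = ∫ s in (-k)..(-l), |s| ^ (p - 2) * (s - (-k)) := by
        have h := intervalIntegral.integral_comp_neg (a := l) (b := k)
          (fun x => |x| ^ (p - 2) * (x - (-k)))
        simp only [abs_neg, neg_sub_neg] at h
        exact h.symm ▸ rfl
      have hc := hcore (-k) (-l) (by linarith)
      simp only [abs_neg, neg_sub_neg] at hc
      rw [h1, h2, h3, max_eq_left (by linarith : (0:ℝ) ≤ k - l),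
        show (|l| + |k| : ℝ) = |k| + |l| from add_comm _ _]
      simp only [mul_neg, neg_neg]
      exact hc
    · have hint : (∫ s in k..l, |s| ^ (p - 2) * max (k - s) 0) = 0 := by
        have heq : Set.EqOn (fun s => |s| ^ (p - 2) * max (k - s) 0) (fun _ => (0:ℝ))
            (Set.uIcc k l) := by
          intro x hx
          rw [Set.uIcc_of_le hlk.le] at hx
          simp only
          rw [max_eq_right (by linarith [hx.1] : k - x ≤ 0), mul_zero]
        rw [intervalIntegral.integral_congr heq, intervalIntegral.integral_zero]
      rw [hint, max_eq_right (by linarith : k - l ≤ 0)]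
      norm_num
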